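/- Let h_l : Σ_l → ℝ be harmonic on rectangles Σ_l = (-l, l) × (0,1), uniformly bounded by M, vanishing on the top and bottom edges [-l+1, l-1] × {0,1}. Then for every fixed compact K ⊂ ℝ × (0,1), sup_K |h_l| → 0 as l → ∞. -/

import Mathlib

/-- A function on `ℝ²` is harmonic on a set if it is `C²` there and its Laplacian
(computed via second derivatives of the coordinate slices) vanishes. -/
def HarmonicOnRect (u : ℝ × ℝ → ℝ) (S : Set (ℝ × ℝ)) : Prop :=
  ContDiffOn ℝ 2 u S ∧ ∀ p ∈ S,
    deriv (deriv fun x => u (x, p.2)) p.1 + deriv (deriv fun y => u (p.1, y)) p.2 = 0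

section Helpers

open Set Filter Topology

/-- From `C²` at a point: eventual differentiability and differentiability of the derivative. -/
lemma c2_pack {f : ℝ → ℝ} {x : ℝ} (hf : ContDiffAt ℝ 2 f x) :
    (∀ᶠ y in 𝓝 x, DifferentiableAt ℝ f y) ∧ DifferentiableAt ℝ (deriv f) x := by
  obtain ⟨u, hu, hfu⟩ := hf.contDiffOn le_rfl (by norm_num)
  have hxu : x ∈ interior u := mem_interior_iff_mem_nhds.2 hu
  have hf2 : ContDiffOn ℝ 2 f (interior u) := hfu.mono interior_subset
  constructor
  · filter_upwards [isOpen_interior.mem_nhds hxu] with y hy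
    exact ((hf2.differentiableOn (by norm_num)) y hy).differentiableAt
      (isOpen_interior.mem_nhds hy)
  · have h1 : ContDiffOn ℝ 1 (deriv f) (interior u) :=
      hf2.deriv_of_isOpen isOpen_interior (by norm_num)
    exact ((h1.differentiableOn (by norm_num)) x hxu).differentiableAt
      (isOpen_interior.mem_nhds hxu)

/-- Second derivative of a linear combination of two `C²` functions. -/
lemma deriv2_comb {f g : ℝ → ℝ} (σ τ : ℝ) {x : ℝ} (hf : ContDiffAt ℝ 2 f x)
    (hg : ContDiffAt ℝ 2 g x) :
    deriv (deriv fun y => σ * f y + τ * g y) x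
      = σ * deriv (deriv f) x + τ * deriv (deriv g) x := by
  obtain ⟨hfe, hfd⟩ := c2_pack hf
  obtain ⟨hge, hgd⟩ := c2_pack hg
  have h1 : (deriv fun y => σ * f y + τ * g y)
      =ᶠ[𝓝 x] fun y => σ * deriv f y + τ * deriv g y := by
    filter_upwards [hfe, hge] with y hy1 hy2
    rw [deriv_fun_add (hy1.const_mul σ) (hy2.const_mul τ), deriv_const_mul σ hy1,
      deriv_const_mul τ hy2]
  rw [h1.deriv_eq, deriv_fun_add (hfd.const_mul σ) (hgd.const_mul τ),
    deriv_const_mul σ hfd, deriv_const_mul τ hgd]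

/-- At an interior local maximum the second derivative is nonpositive. -/
lemma deriv2_nonpos_of_isLocalMax {f : ℝ → ℝ} {x : ℝ}
    (hf : ∀ᶠ y in 𝓝 x, DifferentiableAt ℝ f y) (hmax : IsLocalMax f x) :
    deriv (deriv f) x ≤ 0 := by
  by_contra hpos
  push_neg at hpos
  have hdx : DifferentiableAt ℝ (deriv f) x := by
    by_contra hcon
    rw [deriv_zero_of_not_differentiableAt hcon] at hpos
    exact lt_irrefl _ hpos
  have hd0 : deriv f x = 0 := hmax.deriv_eq_zero
  have hslope : Tendsto (slope (deriv f) x) (𝓝[≠] x) (𝓝 (deriv (deriv f) x)) :=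
    hasDerivAt_iff_tendsto_slope.1 hdx.hasDerivAt
  have hslope' : Tendsto (slope (deriv f) x) (𝓝[>] x) (𝓝 (deriv (deriv f) x)) :=
    hslope.mono_left (nhdsWithin_mono x fun y hy => ne_of_gt hy)
  have hev : ∀ᶠ y in 𝓝[>] x, 0 < slope (deriv f) x y :=
    hslope'.eventually (eventually_gt_nhds hpos)
  have hall : ∀ᶠ y in 𝓝[>] x,
      0 < deriv f y ∧ DifferentiableAt ℝ f y ∧ f y ≤ f x := by
    filter_upwards [hev, eventually_mem_nhdsWithin,
      (hf.and hmax).filter_mono nhdsWithin_le_nhds] with y h1 h2 h3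
    refine ⟨?_, h3.1, h3.2⟩
    have hyx : 0 < y - x := sub_pos.2 h2
    have := mul_pos h1 hyx
    rw [slope_def_field, hd0, sub_zero, div_mul_cancel₀ _ (ne_of_gt hyx)] at this
    exact this
  rw [(nhdsGT_basis x).eventually_iff] at hall
  obtain ⟨b, hxb, hb⟩ := hall
  set m := (x + b) / 2 with hm
  have hxm : x < m := by simp [hm]; linarith
  have hmb : m < b := by simp [hm]; linarith
  have hmono : StrictMonoOn f (Icc x m) := by
    apply strictMonoOn_of_deriv_pos (convex_Icc x m)
    · intro y hy
      rcases eq_or_lt_of_le hy.1 with h | h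
      · subst h; exact hf.self_of_nhds.continuousAt.continuousWithinAt
      · exact ((hb ⟨h, lt_of_le_of_lt hy.2 hmb⟩).2.1.continuousAt).continuousWithinAt
    · intro y hy
      rw [interior_Icc] at hy
      exact (hb ⟨hy.1, lt_trans hy.2 hmb⟩).1
  have hlt : f x < f m := hmono (left_mem_Icc.2 hxm.le) (right_mem_Icc.2 hxm.le) hxm
  exact absurd (hb ⟨hxm, hmb⟩).2.2 (not_le.2 hlt)

lemma deriv2_add {f g : ℝ → ℝ} {x : ℝ} (hf : ContDiffAt ℝ 2 f x)
    (hg : ContDiffAt ℝ 2 g x) :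
    deriv (deriv fun y => f y + g y) x = deriv (deriv f) x + deriv (deriv g) x := by
  obtain ⟨hfe, hfd⟩ := c2_pack hf
  obtain ⟨hge, hgd⟩ := c2_pack hg
  have h1 : (deriv fun y => f y + g y) =ᶠ[𝓝 x] fun y => deriv f y + deriv g y := by
    filter_upwards [hfe, hge] with y hy1 hy2
    exact deriv_add hy1 hy2
  rw [h1.deriv_eq, deriv_fun_add hfd hgd]


/-- Maximum principle for strictly subharmonic functions on a closed rectangle. -/
lemma maxprin_strict {a b c d : ℝ} (hab : a < b) (hcd : c < d) {u : ℝ × ℝ → ℝ}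
    (hcont : ContinuousOn u (Icc a b ×ˢ Icc c d))
    (hsm : ∀ p ∈ Ioo a b ×ˢ Ioo c d,
      (∀ᶠ x in 𝓝 p.1, DifferentiableAt ℝ (fun x => u (x, p.2)) x) ∧
      (∀ᶠ y in 𝓝 p.2, DifferentiableAt ℝ (fun y => u (p.1, y)) y))
    (hlap : ∀ p ∈ Ioo a b ×ˢ Ioo c d,
      0 < deriv (deriv fun x => u (x, p.2)) p.1 + deriv (deriv fun y => u (p.1, y)) p.2)
    (hbdy : ∀ p ∈ Icc a b ×ˢ Icc c d \ Ioo a b ×ˢ Ioo c d, u p ≤ 0) :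
    ∀ p ∈ Icc a b ×ˢ Icc c d, u p ≤ 0 := by
  have hK : IsCompact (Icc a b ×ˢ Icc c d) := isCompact_Icc.prod isCompact_Icc
  have hne : (Icc a b ×ˢ Icc c d).Nonempty :=
    ⟨(a, c), Set.mk_mem_prod (left_mem_Icc.2 hab.le) (left_mem_Icc.2 hcd.le)⟩
  obtain ⟨p₀, hp₀, hmax⟩ := hK.exists_isMaxOn hne hcont
  by_cases hin : p₀ ∈ Ioo a b ×ˢ Ioo c d
  · exfalso
    have hnb : Icc a b ×ˢ Icc c d ∈ 𝓝 p₀ :=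
      mem_nhds_iff.2 ⟨Ioo a b ×ˢ Ioo c d,
        prod_mono Ioo_subset_Icc_self Ioo_subset_Icc_self,
        isOpen_Ioo.prod isOpen_Ioo, hin⟩
    have hloc : IsLocalMax u p₀ := hmax.isLocalMax hnb
    have ht1 : Tendsto (fun x => (x, p₀.2)) (𝓝 p₀.1) (𝓝 p₀) := by
      conv in 𝓝 p₀ => rw [← Prod.mk.eta (p := p₀)]
      exact (continuous_id.prodMk continuous_const).tendsto p₀.1
    have ht2 : Tendsto (fun y => (p₀.1, y)) (𝓝 p₀.2) (𝓝 p₀) := by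
      conv in 𝓝 p₀ => rw [← Prod.mk.eta (p := p₀)]
      exact (continuous_const.prodMk continuous_id).tendsto p₀.2
    have h1 : IsLocalMax (fun x => u (x, p₀.2)) p₀.1 := by
      have := ht1.eventually hloc
      simpa [IsLocalMax, IsMaxFilter] using this
    have h2 : IsLocalMax (fun y => u (p₀.1, y)) p₀.2 := by
      have := ht2.eventually hloc
      simpa [IsLocalMax, IsMaxFilter] using this
    have hA := deriv2_nonpos_of_isLocalMax (hsm p₀ hin).1 h1
    have hB := deriv2_nonpos_of_isLocalMax (hsm p₀ hin).2 h2
    linarith [hlap p₀ hin]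
  · intro p hp
    exact le_trans (hmax hp) (hbdy p₀ ⟨hp₀, hin⟩)

/-- Maximum principle for subharmonic functions on a closed rectangle. -/
lemma maxprin {a b c d : ℝ} (hab : a < b) (hcd : c < d) {u : ℝ × ℝ → ℝ}
    (hcont : ContinuousOn u (Icc a b ×ˢ Icc c d))
    (hsm : ∀ p ∈ Ioo a b ×ˢ Ioo c d,
      ContDiffAt ℝ 2 (fun x => u (x, p.2)) p.1 ∧ ContDiffAt ℝ 2 (fun y => u (p.1, y)) p.2)
    (hlap : ∀ p ∈ Ioo a b ×ˢ Ioo c d,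
      0 ≤ deriv (deriv fun x => u (x, p.2)) p.1 + deriv (deriv fun y => u (p.1, y)) p.2)
    (hbdy : ∀ p ∈ Icc a b ×ˢ Icc c d \ Ioo a b ×ˢ Ioo c d, u p ≤ 0) :
    ∀ p ∈ Icc a b ×ˢ Icc c d, u p ≤ 0 := by
  intro p hp
  set C := Real.cosh (|a| + |b|) with hCdef
  have hCpos : 0 < C := Real.cosh_pos _
  have key : ∀ ε : ℝ, 0 < ε → u p ≤ ε * C := by
    intro ε hε
    set v : ℝ × ℝ → ℝ := fun q => u q + ε * (Real.cosh q.1 - C) with hv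
    have hvle : v p ≤ 0 := by
      refine maxprin_strict hab hcd ?_ ?_ ?_ ?_ p hp
      · exact hcont.add (continuous_const.mul
          ((Real.continuous_cosh.comp continuous_fst).sub continuous_const)).continuousOn
      · rintro ⟨s, t⟩ hq
        obtain ⟨h1, h2⟩ := hsm ⟨s, t⟩ hq
        constructor
        · filter_upwards [(c2_pack h1).1] with y hy
          exact hy.add ((((Real.differentiable_cosh y).sub_const C).const_mul ε))
        · filter_upwards [(c2_pack h2).1] with y hy
          exact hy.add_const (ε * (Real.cosh s - C))
      · rintro ⟨s, t⟩ hq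
        obtain ⟨h1, h2⟩ := hsm ⟨s, t⟩ hq
        have hgs : ContDiffAt ℝ 2 (fun x : ℝ => ε * (Real.cosh x - C)) s :=
          (contDiff_const.mul (Real.contDiff_cosh.sub contDiff_const)).contDiffAt
        have hd2g : deriv (deriv fun x : ℝ => ε * (Real.cosh x - C)) s
            = ε * Real.cosh s := by
          have hd : (deriv fun x : ℝ => ε * (Real.cosh x - C))
              = fun x => ε * Real.sinh x := by
            funext y
            exact (((Real.hasDerivAt_cosh y).sub_const C).const_mul ε).deriv
          rw [hd]
          exact ((Real.hasDerivAt_sinh s).const_mul ε).deriv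
        have e1 : deriv (deriv fun x => v (x, t)) s
            = deriv (deriv fun x => u (x, t)) s + ε * Real.cosh s := by
          have hrfl : (fun x => v (x, t))
              = fun x => u (x, t) + ε * (Real.cosh x - C) := rfl
          rw [hrfl, deriv2_add h1 hgs, hd2g]
        have e3 : deriv (deriv fun y => v (s, y)) t
            = deriv (deriv fun y => u (s, y)) t := by
          have hrfl : (fun y => v (s, y))
              = fun y => u (s, y) + ε * (Real.cosh s - C) := rfl
          rw [hrfl, deriv2_add h2 contDiffAt_const]
          simp
        have hlap' := hlap ⟨s, t⟩ hq
        have hch : 0 < Real.cosh s := Real.cosh_pos _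
        rw [e1, e3]
        have hεc : 0 < ε * Real.cosh s := mul_pos hε hch
        simp only [Set.mem_prod] at hlap'
        linarith
      · rintro ⟨s, t⟩ ⟨hq1, hq2⟩
        have hu0 : u (s, t) ≤ 0 := hbdy ⟨s, t⟩ ⟨hq1, hq2⟩
        have hs : s ∈ Icc a b := hq1.1
        have habs : |s| ≤ |a| + |b| := by
          rw [abs_le]
          constructor
          · have := neg_abs_le a; have := hs.1; have := abs_nonneg b; linarith
          · have := le_abs_self b; have := hs.2; have := abs_nonneg a; linarith
        have hnn : (0:ℝ) ≤ |a| + |b| := by positivity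
        have hcosh : Real.cosh s ≤ C := by
          rw [hCdef]
          refine Real.cosh_le_cosh.2 ?_
          rw [abs_of_nonneg hnn]
          exact habs
        have hnonpos : ε * (Real.cosh s - C) ≤ 0 :=
          mul_nonpos_of_nonneg_of_nonpos hε.le (by linarith)
        show u (s, t) + ε * (Real.cosh (s, t).1 - C) ≤ 0
        simp only
        linarith
    have hch : 0 < Real.cosh p.1 := Real.cosh_pos _
    have hv2 : u p + ε * (Real.cosh p.1 - C) ≤ 0 := hvle
    nlinarith
  by_contra hcon
  push_neg at hcon
  have h1 := key (u p / (2 * C)) (by positivity)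
  have h2 : u p / (2 * C) * C = u p / 2 := by field_simp
  rw [h2] at h1
  linarith


/-- Second derivative of the `cosh` slice of the barrier. -/
lemma deriv2_barrier_x (c k : ℝ) (x : ℝ) :
    deriv (deriv fun x => c * (Real.cosh x * k)) x = c * (Real.cosh x * k) := by
  have h1 : (deriv fun x => c * (Real.cosh x * k)) = fun x => c * (Real.sinh x * k) := by
    funext y
    exact (((Real.hasDerivAt_cosh y).mul_const k).const_mul c).deriv
  rw [h1]
  exact (((Real.hasDerivAt_sinh x).mul_const k).const_mul c).deriv

/-- Second derivative of the `cos` slice of the barrier. -/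
lemma deriv2_barrier_y (c k : ℝ) (y : ℝ) :
    deriv (deriv fun y => c * (k * Real.cos (y - 2⁻¹))) y
      = -(c * (k * Real.cos (y - 2⁻¹))) := by
  have hc : ∀ z : ℝ, HasDerivAt (fun y : ℝ => c * (k * Real.cos (y - 2⁻¹)))
      (c * (k * -Real.sin (z - 2⁻¹))) z := by
    intro z
    have h0 : HasDerivAt (fun y : ℝ => y - 2⁻¹) 1 z := (hasDerivAt_id z).sub_const _
    have h1 : HasDerivAt (fun y : ℝ => Real.cos (y - 2⁻¹)) (-Real.sin (z - 2⁻¹)) z := by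
      simpa [Function.comp_def] using (Real.hasDerivAt_cos (z - 2⁻¹)).comp z h0
    exact (h1.const_mul k).const_mul c
  rw [deriv_eq fun z => hc z]
  have h2 : HasDerivAt (fun z : ℝ => Real.sin (z - 2⁻¹)) (Real.cos (y - 2⁻¹)) y := by
    simpa [Function.comp_def] using (Real.hasDerivAt_sin (y - 2⁻¹)).comp y ((hasDerivAt_id y).sub_const _)
  have h3 : HasDerivAt (fun z : ℝ => c * (k * -Real.sin (z - 2⁻¹)))
      (-(c * (k * Real.cos (y - 2⁻¹)))) y := by
    have := (h2.neg.const_mul k).const_mul c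
    exact this.congr_deriv (by ring)
  exact h3.deriv


end Helpers

open Set Filter Topology in
theorem rectangles_harmonic_decay (h : ℕ → ℝ × ℝ → ℝ) (M : ℝ)
    (hharm : ∀ l : ℕ, HarmonicOnRect (h l)
      (Set.Ioo (-(l : ℝ)) (l : ℝ) ×ˢ Set.Ioo (0 : ℝ) 1))
    (hbdd : ∀ l : ℕ, ∀ p ∈ Set.Ioo (-(l : ℝ)) (l : ℝ) ×ˢ Set.Ioo (0 : ℝ) 1,
      |h l p| ≤ M)
    (hcont : ∀ l : ℕ, ContinuousOn (h l)
      (closure (Set.Ioo (-(l : ℝ)) (l : ℝ) ×ˢ Set.Ioo (0 : ℝ) 1)))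
    (hvanish : ∀ l : ℕ, ∀ s : ℝ, |s| ≤ (l : ℝ) - 1 →
      h l (s, 0) = 0 ∧ h l (s, 1) = 0) :
    ∀ K : Set (ℝ × ℝ), IsCompact K → K ⊆ {p : ℝ × ℝ | p.2 ∈ Set.Ioo (0 : ℝ) 1} →
      ∀ ε > 0, ∃ N : ℕ, ∀ l ≥ N, ∀ p ∈ K, |h l p| ≤ ε := by
  intro K hK hKs ε hε
  -- `M` is nonnegative
  have hM0 : 0 ≤ M := by
    have h1 : ((0:ℝ), (2⁻¹:ℝ)) ∈ Set.Ioo (-((1:ℕ) : ℝ)) ((1:ℕ) : ℝ) ×ˢ Set.Ioo (0:ℝ) 1 := by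
      constructor <;> constructor <;> norm_num
    exact le_trans (abs_nonneg _) (hbdd 1 _ h1)
  -- bound on first coordinates of `K`
  obtain ⟨r, hr⟩ : ∃ r : ℝ, ∀ p ∈ K, |p.1| ≤ r := by
    obtain ⟨r, hr⟩ := (hK.image continuous_fst).isBounded.subset_closedBall 0
    refine ⟨r, fun p hp => ?_⟩
    have := hr ⟨p, hp, rfl⟩
    simpa [Real.dist_eq] using this
  set R := max r 0 with hR
  have hR0 : 0 ≤ R := le_max_right _ _
  have hr' : ∀ p ∈ K, |p.1| ≤ R := fun p hp => le_trans (hr p hp) (le_max_left _ _)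
  -- the constant `cos (1/2)` and its positivity
  have hπ : (3:ℝ) < Real.pi := Real.pi_gt_three
  set c₀ := Real.cos 2⁻¹ with hc₀
  have hc₀pos : 0 < c₀ := Real.cos_pos_of_mem_Ioo (by constructor <;> [linarith; linarith])
  -- choice of N
  set T := M * Real.cosh R / (ε * c₀) with hT
  obtain ⟨N, hN⟩ := exists_nat_ge (max (R + 2) (2 * T + 1))
  refine ⟨N, fun l hl p hpK => ?_⟩
  have hlN : (max (R + 2) (2 * T + 1)) ≤ (l : ℝ) :=
    le_trans hN (Nat.cast_le.2 hl)
  have hlR : R + 2 ≤ (l : ℝ) := le_trans (le_max_left _ _) hlN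
  have hlT : 2 * T + 1 ≤ (l : ℝ) := le_trans (le_max_right _ _) hlN
  set L := (l : ℝ) - 1 with hL
  have hLR : R + 1 ≤ L := by simp only [hL]; linarith
  have hL1 : (1:ℝ) ≤ L := by linarith
  have hLl : L < (l : ℝ) := by simp only [hL]; linarith
  have hcoshL : T ≤ Real.cosh L := by
    have e1 : L + 1 ≤ Real.exp L := Real.add_one_le_exp L
    have e2 : 0 < Real.exp (-L) := Real.exp_pos _
    rw [Real.cosh_eq]
    linarith
  have hcoshLpos : 0 < Real.cosh L := Real.cosh_pos _
  -- the barrier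
  set c := M / (Real.cosh L * c₀) with hc
  have hcpos : 0 ≤ c := div_nonneg hM0 (by positivity)
  set B : ℝ × ℝ → ℝ := fun q => c * (Real.cosh q.1 * Real.cos (q.2 - 2⁻¹)) with hB
  have hBnn : ∀ t : ℝ, t ∈ Icc (0:ℝ) 1 → ∀ s : ℝ, 0 ≤ B (s, t) := by
    intro t ht s
    have hcos : 0 ≤ Real.cos (t - 2⁻¹) :=
      Real.cos_nonneg_of_mem_Icc ⟨by simp at ht ⊢; linarith [ht.1], by simp at ht ⊢; linarith [ht.2]⟩
    exact mul_nonneg hcpos (mul_nonneg (Real.cosh_pos _).le hcos)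
  have hsub_open : Ioo (-L) L ×ˢ Ioo (0:ℝ) 1 ⊆ Ioo (-(l:ℝ)) (l:ℝ) ×ˢ Ioo (0:ℝ) 1 :=
    prod_mono (Ioo_subset_Ioo (by linarith) (by linarith)) subset_rfl
  have hopen : IsOpen (Ioo (-(l:ℝ)) (l:ℝ) ×ˢ Ioo (0:ℝ) 1) := isOpen_Ioo.prod isOpen_Ioo
  have hclosure : Icc (-L) L ×ˢ Icc (0:ℝ) 1
      ⊆ closure (Ioo (-(l:ℝ)) (l:ℝ) ×ˢ Ioo (0:ℝ) 1) := by
    rw [closure_prod_eq, closure_Ioo (by linarith : -(l:ℝ) ≠ (l:ℝ)),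
      closure_Ioo (by norm_num : (0:ℝ) ≠ 1)]
    exact prod_mono (Icc_subset_Icc (by linarith) (by linarith)) subset_rfl
  -- the key comparison
  have key : ∀ σ : ℝ, |σ| = 1 → ∀ q ∈ Icc (-L) L ×ˢ Icc (0:ℝ) 1,
      σ * h l q + (-1) * B q ≤ 0 := by
    intro σ hσ
    refine maxprin (by linarith : -L < L) (by norm_num : (0:ℝ) < 1) ?_ ?_ ?_ ?_
    · have hBcont : Continuous B := by
        simp only [hB]; fun_prop
      exact (((hcont l).mono hclosure).const_smul σ).add
        (continuous_const.mul hBcont).continuousOn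
    · -- smoothness of slices
      intro q hq
      have hCDp : ContDiffAt ℝ 2 (h l) q :=
        (hharm l).1.contDiffAt (hopen.mem_nhds (hsub_open hq))
      have hmk : ContDiffAt ℝ 2 (fun x : ℝ => (x, q.2)) q.1 :=
        contDiffAt_id.prodMk contDiffAt_const
      have hmk' : ContDiffAt ℝ 2 (fun y : ℝ => (q.1, y)) q.2 :=
        contDiffAt_const.prodMk contDiffAt_id
      have hx_h : ContDiffAt ℝ 2 (fun x => h l (x, q.2)) q.1 := hCDp.comp q.1 hmk
      have hy_h : ContDiffAt ℝ 2 (fun y => h l (q.1, y)) q.2 := hCDp.comp q.2 hmk'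
      have hBx : ContDiffAt ℝ 2
          (fun x : ℝ => c * (Real.cosh x * Real.cos (q.2 - 2⁻¹))) q.1 :=
        (contDiff_const.mul (Real.contDiff_cosh.mul contDiff_const)).contDiffAt
      have hBy : ContDiffAt ℝ 2
          (fun y : ℝ => c * (Real.cosh q.1 * Real.cos (y - 2⁻¹))) q.2 :=
        (contDiff_const.mul (contDiff_const.mul
          (Real.contDiff_cos.comp (contDiff_id.sub contDiff_const)))).contDiffAt
      exact ⟨(contDiffAt_const.mul hx_h).add (contDiffAt_const.mul hBx),
        (contDiffAt_const.mul hy_h).add (contDiffAt_const.mul hBy)⟩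
    · -- the Laplacian vanishes
      intro q hq
      have hCDp : ContDiffAt ℝ 2 (h l) q :=
        (hharm l).1.contDiffAt (hopen.mem_nhds (hsub_open hq))
      have hx_h : ContDiffAt ℝ 2 (fun x => h l (x, q.2)) q.1 :=
        hCDp.comp q.1 (contDiffAt_id.prodMk contDiffAt_const)
      have hy_h : ContDiffAt ℝ 2 (fun y => h l (q.1, y)) q.2 :=
        hCDp.comp q.2 (contDiffAt_const.prodMk contDiffAt_id)
      have hBx : ContDiffAt ℝ 2
          (fun x : ℝ => c * (Real.cosh x * Real.cos (q.2 - 2⁻¹))) q.1 :=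
        (contDiff_const.mul (Real.contDiff_cosh.mul contDiff_const)).contDiffAt
      have hBy : ContDiffAt ℝ 2
          (fun y : ℝ => c * (Real.cosh q.1 * Real.cos (y - 2⁻¹))) q.2 :=
        (contDiff_const.mul (contDiff_const.mul
          (Real.contDiff_cos.comp (contDiff_id.sub contDiff_const)))).contDiffAt
      have hharm2 := (hharm l).2 q (hsub_open hq)
      show 0 ≤ deriv (deriv fun x => σ * h l (x, q.2)
            + (-1) * (c * (Real.cosh x * Real.cos (q.2 - 2⁻¹)))) q.1
          + deriv (deriv fun y => σ * h l (q.1, y)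
            + (-1) * (c * (Real.cosh q.1 * Real.cos (y - 2⁻¹)))) q.2
      rw [deriv2_comb σ (-1) hx_h hBx, deriv2_comb σ (-1) hy_h hBy,
        deriv2_barrier_x, deriv2_barrier_y]
      have h2 : σ * deriv (deriv fun x => h l (x, q.2)) q.1
          + σ * deriv (deriv fun y => h l (q.1, y)) q.2 = 0 := by
        rw [← mul_add, hharm2, mul_zero]
      linarith
    · -- boundary inequality
      rintro ⟨s, t⟩ ⟨hq1, hq2⟩
      have hs : s ∈ Icc (-L) L := hq1.1
      have ht : t ∈ Icc (0:ℝ) 1 := hq1.2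
      have hsabs : |s| ≤ L := abs_le.2 ⟨hs.1, hs.2⟩
      by_cases htIoo : t ∈ Ioo (0:ℝ) 1
      · -- side edges
        have hsnot : s ∉ Ioo (-L) L := fun hsin => hq2 ⟨hsin, htIoo⟩
        have hsval : s = -L ∨ s = L := by
          simp only [mem_Ioo, not_and_or, not_lt] at hsnot
          rcases hsnot with h' | h'
          · left; linarith [hs.1]
          · right; linarith [hs.2]
        have hcoshs : Real.cosh s = Real.cosh L := by
          rcases hsval with h' | h' <;> rw [h'] <;> simp [Real.cosh_neg]
        have hhb : |h l (s, t)| ≤ M := by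
          apply hbdd l
          have hLs := abs_le.1 hsabs
          exact ⟨⟨by linarith [hLs.1], by linarith [hLs.2]⟩, htIoo⟩
        have hcosge : c₀ ≤ Real.cos (t - 2⁻¹) := by
          have h1 : |t - 2⁻¹| ≤ 2⁻¹ := by
            rw [abs_le]
            constructor
            · linarith [ht.1]
            · linarith [ht.2]
          calc c₀ = Real.cos 2⁻¹ := rfl
            _ ≤ Real.cos |t - 2⁻¹| :=
              Real.cos_le_cos_of_nonneg_of_le_pi (abs_nonneg _) (by linarith) h1
            _ = Real.cos (t - 2⁻¹) := Real.cos_abs _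
        have hMB : M ≤ B (s, t) := by
          have hBeq : B (s, t) = M * (Real.cos (t - 2⁻¹) / c₀) := by
            show c * (Real.cosh s * Real.cos (t - 2⁻¹)) = _
            rw [hcoshs, hc]
            field_simp
          rw [hBeq]
          have hdiv : 1 ≤ Real.cos (t - 2⁻¹) / c₀ := (one_le_div hc₀pos).2 hcosge
          exact le_mul_of_one_le_right hM0 hdiv
        have hσh : σ * h l (s, t) ≤ M := by
          calc σ * h l (s, t) ≤ |σ * h l (s, t)| := le_abs_self _
            _ = |h l (s, t)| := by rw [abs_mul, hσ, one_mul]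
            _ ≤ M := hhb
        linarith
      · -- top and bottom edges
        have ht01 : t = 0 ∨ t = 1 := by
          simp only [mem_Ioo, not_and_or, not_lt] at htIoo
          rcases htIoo with h' | h'
          · left; linarith [ht.1]
          · right; linarith [ht.2]
        have hsl : |s| ≤ (l:ℝ) - 1 := hsabs
        have h0 : h l (s, t) = 0 := by
          rcases ht01 with h' | h' <;> rw [h']
          · exact (hvanish l s hsl).1
          · exact (hvanish l s hsl).2
        rw [h0, mul_zero]
        linarith [hBnn t ht s]
  -- conclude
  have hpmem : p ∈ Icc (-L) L ×ˢ Icc (0:ℝ) 1 := by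
    constructor
    · have := abs_le.1 (le_trans (hr' p hpK) (by linarith : R ≤ L))
      exact ⟨this.1, this.2⟩
    · have := hKs hpK
      exact ⟨this.1.le, this.2.le⟩
  have h1 := key 1 (by norm_num) p hpmem
  have h2 := key (-1) (by norm_num) p hpmem
  have habsB : |h l p| ≤ B p := by
    rw [abs_le]; constructor <;> linarith
  have hBle : B p ≤ ε := by
    have hcosle : Real.cos (p.2 - 2⁻¹) ≤ 1 := Real.cos_le_one _
    have hcosnn : 0 ≤ Real.cos (p.2 - 2⁻¹) := by
      have ht := hKs hpK
      exact Real.cos_nonneg_of_mem_Icc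
        ⟨by simp at ht ⊢; linarith [ht.1.le], by simp at ht ⊢; linarith [ht.2.le]⟩
    have hcoshle : Real.cosh p.1 ≤ Real.cosh R := by
      refine Real.cosh_le_cosh.2 ?_
      rw [abs_of_nonneg hR0]
      exact hr' p hpK
    have hmul : Real.cosh p.1 * Real.cos (p.2 - 2⁻¹) ≤ Real.cosh R :=
      le_trans (mul_le_mul_of_nonneg_left hcosle (Real.cosh_pos _).le)
        (by simpa using hcoshle)
    have step1 : B p ≤ c * Real.cosh R := by
      exact mul_le_mul_of_nonneg_left hmul hcpos
    have step2 : c * Real.cosh R ≤ ε := by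
      rw [hc, div_mul_eq_mul_div, div_le_iff₀ (by positivity)]
      have hTle := (div_le_iff₀ (by positivity : 0 < ε * c₀)).1 hcoshL
      calc M * Real.cosh R ≤ Real.cosh L * (ε * c₀) := hTle
        _ = ε * (Real.cosh L * c₀) := by ring
    exact le_trans step1 step2
  exact le_trans habsB hBle
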